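/- For every real x ≥ 1, the Mertens function satisfies M(x) = 2·M(√x) − Σ_{i=1}^{⌊√x⌋} Σ_{j=1}^{⌊√x⌋} μ(i)·μ(j)·⌊x/(i·j)⌋. -/

import Mathlib

open ArithmeticFunction Finset

noncomputable def Mertens (x : ℝ) : ℤ := ∑ k ∈ Finset.Icc 1 ⌊x⌋₊, moebius k

noncomputable def Nplus (x : ℝ) : ℕ := ((Finset.Icc 1 ⌊x⌋₊).filter (fun n => moebius n = 1)).card

noncomputable def Nminus (x : ℝ) : ℕ := ((Finset.Icc 1 ⌊x⌋₊).filter (fun n => moebius n = -1)).card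

noncomputable def Nzero (x : ℝ) : ℕ := ((Finset.Icc 1 ⌊x⌋₊).filter (fun n => moebius n = 0)).card

noncomputable def Qsf (x : ℝ) : ℕ := ((Finset.Icc 1 ⌊x⌋₊).filter (fun n => moebius n ≠ 0)).card

lemma icc_eq_ioc (n : ℕ) : Finset.Icc 1 n = Finset.Ioc 0 n := by
  rw [← Finset.Icc_add_one_left_eq_Ioc, zero_add]

lemma floor_real_div (y : ℝ) (hy : 0 ≤ y) (m : ℕ) : ⌊y / (m:ℝ)⌋ = ((⌊y⌋₊ / m : ℕ) : ℤ) := by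
  rw [← Nat.floor_div_natCast, Int.natCast_floor_eq_floor (by positivity)]

lemma card_mult (N m : ℕ) : ((Finset.Icc 1 N).filter (fun k => m ∣ k)).card = N / m := by
  rw [icc_eq_ioc]
  simpa using Nat.Ioc_filter_dvd_card_eq_div N m

lemma divisors_eq_filter {k N : ℕ} (hk : k ∈ Finset.Icc 1 N) :
    (Finset.Icc 1 N).filter (fun i => i ∣ k) = k.divisors := by
  simp only [mem_Icc] at hk
  ext d
  simp only [mem_filter, mem_Icc, Nat.mem_divisors]
  constructor
  · rintro ⟨_, hd⟩; exact ⟨hd, by omega⟩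
  · rintro ⟨hd, _⟩
    have hd0 : d ≠ 0 := by rintro rfl; simp at hd; omega
    exact ⟨⟨by omega, le_trans (Nat.le_of_dvd (by omega) hd) hk.2⟩, hd⟩

lemma key_sum (y : ℝ) (hy : 1 ≤ y) :
    ∑ i ∈ Finset.Icc 1 ⌊y⌋₊, (moebius i : ℤ) * ⌊y / (i:ℝ)⌋ = 1 := by
  have h0 : (0:ℝ) ≤ y := by linarith
  have hN : 1 ≤ ⌊y⌋₊ := Nat.one_le_floor_iff _ |>.mpr hy
  calc ∑ i ∈ Finset.Icc 1 ⌊y⌋₊, (moebius i : ℤ) * ⌊y / (i:ℝ)⌋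
      = ∑ i ∈ Finset.Icc 1 ⌊y⌋₊, (moebius i : ℤ) *
          (((Finset.Icc 1 ⌊y⌋₊).filter (fun k => i ∣ k)).card : ℤ) := by
        refine Finset.sum_congr rfl fun i _ => ?_
        rw [floor_real_div y h0 i, card_mult]
    _ = ∑ i ∈ Finset.Icc 1 ⌊y⌋₊, ∑ k ∈ Finset.Icc 1 ⌊y⌋₊,
          if i ∣ k then (moebius i : ℤ) else 0 := by
        refine Finset.sum_congr rfl fun i _ => ?_
        rw [← Finset.sum_filter, Finset.sum_const, nsmul_eq_mul, mul_comm]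
    _ = ∑ k ∈ Finset.Icc 1 ⌊y⌋₊, ∑ i ∈ Finset.Icc 1 ⌊y⌋₊,
          if i ∣ k then (moebius i : ℤ) else 0 := Finset.sum_comm
    _ = ∑ k ∈ Finset.Icc 1 ⌊y⌋₊, if k = 1 then 1 else 0 := by
        refine Finset.sum_congr rfl fun k hk => ?_
        rw [← Finset.sum_filter, divisors_eq_filter hk]
        have h := (congrArg (fun f : ArithmeticFunction ℤ => f k) moebius_mul_coe_zeta)
        simp only [coe_mul_zeta_apply, one_apply] at h
        exact h
    _ = 1 := by
        rw [Finset.sum_ite_eq' (Finset.Icc 1 ⌊y⌋₊) 1 (fun _ => (1:ℤ))]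
        simp [hN]

lemma pair_inner {k N : ℕ} (hk : k ∈ Finset.Icc 1 N) :
    ∑ p ∈ (Finset.Icc 1 N ×ˢ Finset.Icc 1 N).filter (fun p => p.1 * p.2 ∣ k),
      (moebius p.1 : ℤ) * moebius p.2 = moebius k := by
  simp only [mem_Icc] at hk
  have hset : (Finset.Icc 1 N ×ˢ Finset.Icc 1 N).filter (fun p => p.1 * p.2 ∣ k)
      = k.divisors.biUnion (fun d => Nat.divisorsAntidiagonal d) := by
    ext p
    simp only [mem_filter, mem_product, mem_Icc, mem_biUnion, Nat.mem_divisors,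
      Nat.mem_divisorsAntidiagonal]
    constructor
    · rintro ⟨⟨⟨h1, _⟩, ⟨h2, _⟩⟩, hd⟩
      exact ⟨p.1 * p.2, ⟨hd, by omega⟩, rfl, by positivity⟩
    · rintro ⟨d, ⟨hd, hk0⟩, rfl, hd0⟩
      have h1 : p.1 ≠ 0 := by rintro h; simp [h] at hd0
      have h2 : p.2 ≠ 0 := by rintro h; simp [h] at hd0
      have hle : p.1 * p.2 ≤ k := Nat.le_of_dvd (by omega) hd
      refine ⟨⟨⟨by omega, ?_⟩, by omega, ?_⟩, hd⟩
      · calc p.1 ≤ p.1 * p.2 := Nat.le_mul_of_pos_right _ (by omega)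
          _ ≤ N := le_trans hle hk.2
      · calc p.2 ≤ p.1 * p.2 := Nat.le_mul_of_pos_left _ (by omega)
          _ ≤ N := le_trans hle hk.2
  rw [hset, Finset.sum_biUnion]
  · have hconv : ((moebius * moebius * ArithmeticFunction.zeta : ArithmeticFunction ℤ)) k = moebius k := by
      rw [mul_assoc, moebius_mul_coe_zeta, mul_one]
    rw [← hconv, coe_mul_zeta_apply]
    exact Finset.sum_congr rfl fun d _ => (mul_apply).symm
  · intro a _ b _ hab
    simp only [Finset.disjoint_left]
    intro p hpa hpb
    rw [Nat.mem_divisorsAntidiagonal] at hpa hpb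
    exact hab (hpa.1.symm.trans hpb.1)

lemma lemmaB (x : ℝ) (hx : 1 ≤ x) :
    ∑ k ∈ Finset.Icc 1 ⌊x⌋₊, (moebius k : ℤ) =
    ∑ i ∈ Finset.Icc 1 ⌊x⌋₊, ∑ j ∈ Finset.Icc 1 ⌊x⌋₊,
      (moebius i : ℤ) * moebius j * ⌊x / (i * j : ℝ)⌋ := by
  have h0 : (0:ℝ) ≤ x := by linarith
  set N := ⌊x⌋₊ with hN
  calc ∑ k ∈ Finset.Icc 1 N, (moebius k : ℤ)
      = ∑ k ∈ Finset.Icc 1 N,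
          ∑ p ∈ (Finset.Icc 1 N ×ˢ Finset.Icc 1 N).filter (fun p => p.1 * p.2 ∣ k),
            (moebius p.1 : ℤ) * moebius p.2 :=
        (Finset.sum_congr rfl fun k hk => (pair_inner hk).symm)
    _ = ∑ k ∈ Finset.Icc 1 N, ∑ p ∈ Finset.Icc 1 N ×ˢ Finset.Icc 1 N,
          if p.1 * p.2 ∣ k then (moebius p.1 : ℤ) * moebius p.2 else 0 := by
        refine Finset.sum_congr rfl fun k _ => (Finset.sum_filter _ _)
    _ = ∑ p ∈ Finset.Icc 1 N ×ˢ Finset.Icc 1 N, ∑ k ∈ Finset.Icc 1 N,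
          if p.1 * p.2 ∣ k then (moebius p.1 : ℤ) * moebius p.2 else 0 := Finset.sum_comm
    _ = ∑ p ∈ Finset.Icc 1 N ×ˢ Finset.Icc 1 N,
          (moebius p.1 : ℤ) * moebius p.2 * ⌊x / (p.1 * p.2 : ℝ)⌋ := by
        refine Finset.sum_congr rfl fun p _ => ?_
        rw [← Finset.sum_filter, Finset.sum_const, nsmul_eq_mul, card_mult, mul_comm]
        congr 1
        rw [show ((p.1 : ℝ) * p.2) = ((p.1 * p.2 : ℕ) : ℝ) by push_cast; ring,
          floor_real_div x h0]
    _ = ∑ i ∈ Finset.Icc 1 N, ∑ j ∈ Finset.Icc 1 N,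
          (moebius i : ℤ) * moebius j * ⌊x / (i * j : ℝ)⌋ := by rw [Finset.sum_product]

theorem stmt0 (x : ℝ) (hx : 1 ≤ x) :
    Mertens x = 2 * Mertens (Real.sqrt x) -
      ∑ i ∈ Finset.Icc 1 ⌊Real.sqrt x⌋₊, ∑ j ∈ Finset.Icc 1 ⌊Real.sqrt x⌋₊,
        moebius i * moebius j * ⌊x / (i * j : ℝ)⌋ := by
  have h0 : (0:ℝ) ≤ x := by linarith
  have hs0 : (0:ℝ) ≤ Real.sqrt x := Real.sqrt_nonneg x
  have hs1 : (1:ℝ) ≤ Real.sqrt x := by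
    rw [show (1:ℝ) = Real.sqrt 1 by simp]; exact Real.sqrt_le_sqrt hx
  have hss : Real.sqrt x * Real.sqrt x = x := Real.mul_self_sqrt h0
  have hsx : Real.sqrt x ≤ x := by nlinarith
  set K := ⌊Real.sqrt x⌋₊ with hKdef
  set N := ⌊x⌋₊ with hNdef
  have hKN : K ≤ N := Nat.floor_mono hsx
  have hKs : (K : ℝ) ≤ Real.sqrt x := Nat.floor_le hs0
  -- floor is zero when product exceeds x
  have hzero : ∀ i j : ℕ, x < (i:ℝ) * j → ⌊x / ((i:ℝ) * j)⌋ = 0 := by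
    intro i j hij
    have hpos : (0:ℝ) < (i:ℝ) * j := by linarith
    rw [Int.floor_eq_zero_iff]
    constructor
    · positivity
    · rw [div_lt_one hpos]; exact hij
  -- terms with i, j both > K vanish
  have hbig : ∀ i ∈ Finset.Ioc K N, ∀ j ∈ Finset.Ioc K N,
      (moebius i : ℤ) * moebius j * ⌊x / ((i:ℝ) * j)⌋ = 0 := by
    intro i hi j hj
    rw [mem_Ioc] at hi hj
    have h1 : Real.sqrt x < i := (Nat.floor_lt hs0).mp hi.1
    have h2 : Real.sqrt x < j := (Nat.floor_lt hs0).mp hj.1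
    have : x < (i:ℝ) * j := by nlinarith
    rw [hzero i j this, mul_zero]
  -- splitting a sum over Icc 1 N
  have hsplit : ∀ (f : ℕ → ℤ), ∑ k ∈ Finset.Icc 1 N, f k =
      ∑ k ∈ Finset.Icc 1 K, f k + ∑ k ∈ Finset.Ioc K N, f k := by
    intro f
    rw [icc_eq_ioc, icc_eq_ioc]
    exact (Finset.sum_Ioc_consecutive f (Nat.zero_le K) hKN).symm
  -- the T term
  set T : ℤ := ∑ j ∈ Finset.Icc 1 K, (moebius j : ℤ) *
      ∑ i ∈ Finset.Ioc K N, (moebius i : ℤ) * ⌊x / ((i:ℝ) * j)⌋ with hTdef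
  -- the S term (as in the statement)
  set S : ℤ := ∑ i ∈ Finset.Icc 1 K, ∑ j ∈ Finset.Icc 1 K,
      (moebius i : ℤ) * moebius j * ⌊x / ((i:ℝ) * j)⌋ with hSdef
  -- Step 1 : Mertens √x = S + T
  have step1 : Mertens (Real.sqrt x) = S + T := by
    have hxj : ∀ j ∈ Finset.Icc 1 K, (1:ℝ) ≤ x / j ∧ K ≤ ⌊x / (j:ℝ)⌋₊ ∧ ⌊x / (j:ℝ)⌋₊ ≤ N := by
      intro j hj
      rw [mem_Icc] at hj
      have hj0 : (0:ℝ) < j := by exact_mod_cast Nat.lt_of_lt_of_le Nat.zero_lt_one hj.1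
      have hjs : (j:ℝ) ≤ Real.sqrt x := le_trans (by exact_mod_cast hj.2) hKs
      have h1 : Real.sqrt x ≤ x / j := by
        rw [le_div_iff₀ hj0]; nlinarith
      have hj1 : (1:ℝ) ≤ j := by exact_mod_cast hj.1
      have h2 : x / j ≤ x := by
        rw [div_le_iff₀ hj0]; nlinarith
      exact ⟨le_trans hs1 h1, Nat.floor_mono h1, Nat.floor_mono h2⟩
    have key : ∀ j ∈ Finset.Icc 1 K,
        (moebius j : ℤ) = (moebius j : ℤ) *
          (∑ i ∈ Finset.Icc 1 K, (moebius i : ℤ) * ⌊x / ((i:ℝ) * j)⌋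
           + ∑ i ∈ Finset.Ioc K N, (moebius i : ℤ) * ⌊x / ((i:ℝ) * j)⌋) := by
      intro j hj
      obtain ⟨hy1, hKj, hjN⟩ := hxj j hj
      rw [mem_Icc] at hj
      have hj0 : (0:ℝ) < j := by exact_mod_cast Nat.lt_of_lt_of_le Nat.zero_lt_one hj.1
      have hdd : ∀ i : ℕ, (x / j) / i = x / ((i:ℝ) * j) := by
        intro i; rw [div_div, mul_comm]
      have hone : ∑ i ∈ Finset.Icc 1 ⌊x / (j:ℝ)⌋₊, (moebius i : ℤ) * ⌊x / ((i:ℝ) * j)⌋ = 1 := by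
        rw [← key_sum (x / j) hy1]
        exact Finset.sum_congr rfl fun i _ => by rw [hdd i]
      have hsplit2 : ∑ i ∈ Finset.Icc 1 ⌊x / (j:ℝ)⌋₊, (moebius i : ℤ) * ⌊x / ((i:ℝ) * j)⌋ =
          ∑ i ∈ Finset.Icc 1 K, (moebius i : ℤ) * ⌊x / ((i:ℝ) * j)⌋
          + ∑ i ∈ Finset.Ioc K ⌊x / (j:ℝ)⌋₊, (moebius i : ℤ) * ⌊x / ((i:ℝ) * j)⌋ := by
        rw [icc_eq_ioc, icc_eq_ioc]
        exact (Finset.sum_Ioc_consecutive _ (Nat.zero_le K) hKj).symm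
      have hext : ∑ i ∈ Finset.Ioc K ⌊x / (j:ℝ)⌋₊, (moebius i : ℤ) * ⌊x / ((i:ℝ) * j)⌋ =
          ∑ i ∈ Finset.Ioc K N, (moebius i : ℤ) * ⌊x / ((i:ℝ) * j)⌋ := by
        refine Finset.sum_subset (Finset.Ioc_subset_Ioc le_rfl hjN) ?_
        intro i hi hni
        rw [mem_Ioc] at hi hni
        have : ⌊x / (j:ℝ)⌋₊ < i := by omega
        have hxi : x / j < i := (Nat.floor_lt (by positivity)).mp this
        have : x < (i:ℝ) * j := by
          rw [div_lt_iff₀ hj0] at hxi; linarith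
        rw [hzero i j this, mul_zero]
      rw [← hext, ← hsplit2, hone, mul_one]
    calc Mertens (Real.sqrt x) = ∑ j ∈ Finset.Icc 1 K, (moebius j : ℤ) := rfl
      _ = ∑ j ∈ Finset.Icc 1 K, (moebius j : ℤ) *
          (∑ i ∈ Finset.Icc 1 K, (moebius i : ℤ) * ⌊x / ((i:ℝ) * j)⌋
           + ∑ i ∈ Finset.Ioc K N, (moebius i : ℤ) * ⌊x / ((i:ℝ) * j)⌋) :=
        Finset.sum_congr rfl key
      _ = (∑ j ∈ Finset.Icc 1 K, ∑ i ∈ Finset.Icc 1 K,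
            (moebius j : ℤ) * ((moebius i : ℤ) * ⌊x / ((i:ℝ) * j)⌋)) + T := by
        rw [hTdef, ← Finset.sum_add_distrib]
        refine Finset.sum_congr rfl fun j _ => ?_
        rw [mul_add, Finset.mul_sum]
      _ = S + T := by
        congr 1
        rw [hSdef, Finset.sum_comm]
        refine Finset.sum_congr rfl fun i _ => Finset.sum_congr rfl fun j _ => by ring
  -- Step 2 : Mertens x = S + 2 * T
  have step2 : Mertens x = S + 2 * T := by
    have hB := lemmaB x hx
    rw [Mertens, ← hNdef] at *
    rw [hB]
    have e1 : ∑ i ∈ Finset.Icc 1 N, ∑ j ∈ Finset.Icc 1 N,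
        (moebius i : ℤ) * moebius j * ⌊x / ((i:ℝ) * j)⌋ =
        (∑ i ∈ Finset.Icc 1 K, ∑ j ∈ Finset.Icc 1 K,
          (moebius i : ℤ) * moebius j * ⌊x / ((i:ℝ) * j)⌋)
        + (∑ i ∈ Finset.Icc 1 K, ∑ j ∈ Finset.Ioc K N,
          (moebius i : ℤ) * moebius j * ⌊x / ((i:ℝ) * j)⌋)
        + (∑ i ∈ Finset.Ioc K N, ∑ j ∈ Finset.Icc 1 K,
          (moebius i : ℤ) * moebius j * ⌊x / ((i:ℝ) * j)⌋)
        + (∑ i ∈ Finset.Ioc K N, ∑ j ∈ Finset.Ioc K N,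
          (moebius i : ℤ) * moebius j * ⌊x / ((i:ℝ) * j)⌋) := by
      rw [hsplit]
      have inner : ∀ i : ℕ, ∑ j ∈ Finset.Icc 1 N,
          (moebius i : ℤ) * moebius j * ⌊x / ((i:ℝ) * j)⌋ =
          ∑ j ∈ Finset.Icc 1 K, (moebius i : ℤ) * moebius j * ⌊x / ((i:ℝ) * j)⌋
          + ∑ j ∈ Finset.Ioc K N, (moebius i : ℤ) * moebius j * ⌊x / ((i:ℝ) * j)⌋ :=
        fun i => hsplit _
      rw [Finset.sum_congr rfl (fun i _ => inner i),
          Finset.sum_congr (rfl : Finset.Ioc K N = Finset.Ioc K N) (fun i _ => inner i),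
          Finset.sum_add_distrib, Finset.sum_add_distrib]
      ring
    rw [e1]
    have hQ22 : ∑ i ∈ Finset.Ioc K N, ∑ j ∈ Finset.Ioc K N,
        (moebius i : ℤ) * moebius j * ⌊x / ((i:ℝ) * j)⌋ = 0 :=
      Finset.sum_eq_zero fun i hi => Finset.sum_eq_zero fun j hj => hbig i hi j hj
    have hQ21 : ∑ i ∈ Finset.Ioc K N, ∑ j ∈ Finset.Icc 1 K,
        (moebius i : ℤ) * moebius j * ⌊x / ((i:ℝ) * j)⌋ = T := by
      rw [hTdef, Finset.sum_comm]
      refine Finset.sum_congr rfl fun j _ => ?_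
      rw [Finset.mul_sum]
      exact Finset.sum_congr rfl fun i _ => by ring
    have hQ12 : ∑ i ∈ Finset.Icc 1 K, ∑ j ∈ Finset.Ioc K N,
        (moebius i : ℤ) * moebius j * ⌊x / ((i:ℝ) * j)⌋ = T := by
      rw [hTdef]
      refine Finset.sum_congr rfl fun i _ => ?_
      rw [Finset.mul_sum]
      refine Finset.sum_congr rfl fun j _ => ?_
      rw [mul_comm (i:ℝ) (j:ℝ)]
      ring
    rw [hQ22, hQ21, hQ12, ← hSdef]
    ring
  rw [step1, step2]
  ring
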